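/- Let $g : \mathbb{R}^d \to \mathbb{R}$ be a concave upper semicontinuous function, $\Xi \subseteq \mathbb{R}^d$ a nonempty closed convex set, $\hat{\xi} \in \mathbb{R}^d$, $\theta \geq 0$, and $\|\cdot\|$ a norm on $\mathbb{R}^d$. Then $\sup_{\xi \in \Xi} \left[ g(\xi) - \theta \|\xi - \hat{\xi}\| \right] = \inf \left\{ [-g]^*(z - v) + S_\Xi(v) - \langle z, \hat{\xi} \rangle : z, v \in \mathbb{R}^d, \|z\|_* \leq \theta \right\}$, where $[-g]^*$ is the convex conjugate of $-g$, $S_\Xi(v) = \sup_{\xi \in \Xi} \langle v, \xi \rangle$ is the support function of $\Xi$, and $\|\cdot\|_*$ is the dual norm; assuming a suitable constraint qualification (e.g., $g$ is finite on a neighborhood of a point of $\Xi$) so that Fenchel duality holds. -/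

import Mathlib

open Finset


private lemma aux_r_le {e D : ℝ} (h : ∀ r : ℝ, 0 < r → r * e ≤ D) : e ≤ 0 := by
  by_contra hc
  push_neg at hc
  have hr : (0:ℝ) < max 1 ((|D| + 1) / e) := lt_max_of_lt_left one_pos
  have h2 := h _ hr
  have h3 : (|D| + 1) / e * e ≤ max 1 ((|D| + 1) / e) * e :=
    mul_le_mul_of_nonneg_right (le_max_right _ _) hc.le
  rw [div_mul_cancel₀ _ hc.ne'] at h3
  have := le_abs_self D
  linarith

section NormLemmas

variable {d : ℕ} {N : (Fin d → ℝ) → ℝ}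

lemma N_neg (hN_smul : ∀ (c : ℝ) x, N (c • x) = |c| * N x) (x) : N (-x) = N x := by
  have := hN_smul (-1) x; simpa using this

lemma N_zero' (hN_zero : ∀ x, N x = 0 ↔ x = 0) : N 0 = 0 := (hN_zero 0).mpr rfl

lemma N_nonneg (hN_add : ∀ x y, N (x + y) ≤ N x + N y)
    (hN_smul : ∀ (c : ℝ) x, N (c • x) = |c| * N x)
    (hN_zero : ∀ x, N x = 0 ↔ x = 0) (x) : 0 ≤ N x := by
  have h := hN_add x (-x)
  rw [add_neg_cancel, N_zero' hN_zero, N_neg hN_smul] at h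
  linarith

lemma N_lip (hN_add : ∀ x y, N (x + y) ≤ N x + N y)
    (hN_smul : ∀ (c : ℝ) x, N (c • x) = |c| * N x)
    (hN_zero : ∀ x, N x = 0 ↔ x = 0) :
    ∀ w : Fin d → ℝ, N w ≤ (∑ i, N (Pi.single i 1)) * ‖w‖ := by
  intro w
  have hw : w = ∑ i, w i • (Pi.single i 1 : Fin d → ℝ) := by
    ext j; simp [Pi.single_apply]
  calc N w = N (∑ i, w i • (Pi.single i 1 : Fin d → ℝ)) := by rw [← hw]
    _ ≤ ∑ i, N (w i • (Pi.single i 1 : Fin d → ℝ)) :=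
        Finset.le_sum_of_subadditive N (N_zero' hN_zero).le hN_add _ _
    _ ≤ ∑ i, N (Pi.single i 1) * ‖w‖ := by
        refine Finset.sum_le_sum fun i _ => ?_
        rw [hN_smul, mul_comm]
        refine mul_le_mul_of_nonneg_left ?_ (N_nonneg hN_add hN_smul hN_zero _)
        simpa using norm_le_pi_norm w i
    _ = (∑ i, N (Pi.single i 1)) * ‖w‖ := by rw [Finset.sum_mul]

lemma N_cont (hN_add : ∀ x y, N (x + y) ≤ N x + N y)
    (hN_smul : ∀ (c : ℝ) x, N (c • x) = |c| * N x)
    (hN_zero : ∀ x, N x = 0 ↔ x = 0) : Continuous N := by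
  set K := ∑ i, N (Pi.single i (1:ℝ)) with hK
  have key : ∀ x y : Fin d → ℝ, N x - N y ≤ K * ‖x - y‖ := by
    intro x y
    have h1 := hN_add (x - y) y
    rw [sub_add_cancel] at h1
    have := N_lip hN_add hN_smul hN_zero (x - y)
    linarith
  have hK0 : 0 ≤ K := Finset.sum_nonneg fun i _ => N_nonneg hN_add hN_smul hN_zero _
  refine LipschitzWith.continuous (K := K.toNNReal) (LipschitzWith.of_dist_le_mul ?_)
  intro x y
  rw [Real.coe_toNNReal _ hK0, Real.dist_eq, dist_eq_norm, abs_sub_le_iff]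
  constructor
  · exact key x y
  · have := key y x
    rwa [norm_sub_rev] at this


lemma N_lower (hN_add : ∀ x y, N (x + y) ≤ N x + N y)
    (hN_smul : ∀ (c : ℝ) x, N (c • x) = |c| * N x)
    (hN_zero : ∀ x, N x = 0 ↔ x = 0) :
    ∃ m : ℝ, 0 < m ∧ ∀ w : Fin d → ℝ, m * ‖w‖ ≤ N w := by
  by_cases hd : ∀ w : Fin d → ℝ, w = 0
  · refine ⟨1, one_pos, fun w => ?_⟩
    rw [hd w]
    simp [(hN_zero 0).mpr rfl]
  · push_neg at hd
    obtain ⟨w0, hw0⟩ := hd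
    have hsne : (Metric.sphere (0 : Fin d → ℝ) 1).Nonempty := by
      refine ⟨‖w0‖⁻¹ • w0, ?_⟩
      rw [mem_sphere_zero_iff_norm]
      rw [norm_smul]
      simp [norm_ne_zero_iff.mpr hw0]
    obtain ⟨xm, hxm, hmin⟩ := (isCompact_sphere (0 : Fin d → ℝ) 1).exists_isMinOn hsne
      ((N_cont hN_add hN_smul hN_zero).continuousOn)
    have hxm1 : ‖xm‖ = 1 := mem_sphere_zero_iff_norm.mp hxm
    have hm0 : 0 < N xm := by
      rcases lt_or_eq_of_le (N_nonneg hN_add hN_smul hN_zero xm) with h | h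
      · exact h
      · exfalso
        have : xm = 0 := (hN_zero xm).mp h.symm
        rw [this] at hxm1; simp at hxm1
    refine ⟨N xm, hm0, fun w => ?_⟩
    rcases eq_or_ne w 0 with rfl | hw
    · simp [(hN_zero 0).mpr rfl]
    · have hnw : (0:ℝ) < ‖w‖ := norm_pos_iff.mpr hw
      have hmem : ‖w‖⁻¹ • w ∈ Metric.sphere (0 : Fin d → ℝ) 1 := by
        rw [mem_sphere_zero_iff_norm, norm_smul]
        simp [abs_of_pos (inv_pos.mpr hnw), inv_mul_cancel₀ hnw.ne']
      have h1 : N xm ≤ N (‖w‖⁻¹ • w) := hmin hmem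
      rw [hN_smul, abs_of_pos (inv_pos.mpr hnw)] at h1
      calc N xm * ‖w‖ ≤ ‖w‖⁻¹ * N w * ‖w‖ := mul_le_mul_of_nonneg_right h1 hnw.le
        _ = N w := by field_simp
  
lemma dual_pair (hN_add : ∀ x y, N (x + y) ≤ N x + N y)
    (hN_smul : ∀ (c : ℝ) x, N (c • x) = |c| * N x)
    (hN_zero : ∀ x, N x = 0 ↔ x = 0)
    {dualN : (Fin d → ℝ) → ℝ}
    (hdual : ∀ s, dualN s = sSup {r : ℝ | ∃ v, N v ≤ 1 ∧ r = ∑ i, s i * v i})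
    {z : Fin d → ℝ} {θ : ℝ} (hz : dualN z ≤ θ) :
    ∀ w : Fin d → ℝ, ∑ i, z i * w i ≤ θ * N w := by
  obtain ⟨m, hm, hml⟩ := N_lower hN_add hN_smul hN_zero
  have hbdd : BddAbove {r : ℝ | ∃ v, N v ≤ 1 ∧ r = ∑ i, z i * v i} := by
    refine ⟨(∑ i, |z i|) / m, fun r hr => ?_⟩
    obtain ⟨v, hv1, rfl⟩ := hr
    have hnv : ‖v‖ ≤ 1 / m := by
      rw [le_div_iff₀ hm, mul_comm]
      exact (hml v).trans hv1
    calc ∑ i, z i * v i ≤ ∑ i, |z i| * ‖v‖ := by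
          refine Finset.sum_le_sum fun i _ => ?_
          calc z i * v i ≤ |z i * v i| := le_abs_self _
            _ = |z i| * |v i| := abs_mul _ _
            _ ≤ |z i| * ‖v‖ := by
                refine mul_le_mul_of_nonneg_left ?_ (abs_nonneg _)
                simpa using norm_le_pi_norm v i
      _ = (∑ i, |z i|) * ‖v‖ := by rw [Finset.sum_mul]
      _ ≤ (∑ i, |z i|) * (1 / m) := by
          refine mul_le_mul_of_nonneg_left hnv (Finset.sum_nonneg fun i _ => abs_nonneg _)
      _ = (∑ i, |z i|) / m := by ring
  intro w
  rcases eq_or_ne w 0 with rfl | hw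
  · simp [(hN_zero 0).mpr rfl]
  · have hNw : 0 < N w := by
      rcases lt_or_eq_of_le (N_nonneg hN_add hN_smul hN_zero w) with h | h
      · exact h
      · exact absurd ((hN_zero w).mp h.symm) hw
    have hmem : (∑ i, z i * ((N w)⁻¹ • w) i) ∈ {r : ℝ | ∃ v, N v ≤ 1 ∧ r = ∑ i, z i * v i} := by
      refine ⟨(N w)⁻¹ • w, ?_, rfl⟩
      rw [hN_smul, abs_of_pos (inv_pos.mpr hNw), inv_mul_cancel₀ hNw.ne']
    have h1 : (∑ i, z i * ((N w)⁻¹ • w) i) ≤ θ := le_trans (le_csSup hbdd hmem) (by rw [← hdual]; exact hz)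
    have h2 : (∑ i, z i * ((N w)⁻¹ • w) i) = (N w)⁻¹ * ∑ i, z i * w i := by
      rw [Finset.mul_sum]
      refine Finset.sum_congr rfl fun i _ => ?_
      simp [Pi.smul_apply]; ring
    rw [h2] at h1
    calc ∑ i, z i * w i = N w * ((N w)⁻¹ * ∑ i, z i * w i) := by field_simp
      _ ≤ N w * θ := mul_le_mul_of_nonneg_left h1 hNw.le
      _ = θ * N w := mul_comm _ _

section Strong
variable {d : ℕ} {g : (Fin d → ℝ) → ℝ}
    (hg_concave : ConcaveOn ℝ Set.univ g)
    {Xi : Set (Fin d → ℝ)}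
    (hXi_convex : Convex ℝ Xi)
    {ξhat : Fin d → ℝ} {θ : ℝ} (hθ : 0 ≤ θ)
    {N : (Fin d → ℝ) → ℝ}
    (hN_add : ∀ x y, N (x + y) ≤ N x + N y)
    (hN_smul : ∀ (c : ℝ) x, N (c • x) = |c| * N x)
    (hN_zero : ∀ x, N x = 0 ↔ x = 0)

include hg_concave hXi_convex hθ hN_add hN_smul hN_zero in
lemma S_convex :
    Convex ℝ {p : (Fin d → ℝ) × (Fin d → ℝ) × ℝ |
      ∃ x ∈ Xi, -g (x + p.1) + θ * N (x + p.2.1 - ξhat) < p.2.2} := by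
  rintro p ⟨x, hx, hpx⟩ q ⟨y, hy, hqy⟩ a b ha hb hab
  refine ⟨a • x + b • y, hXi_convex hx hy ha hb hab, ?_⟩
  have e1 : a • x + b • y + (a • p + b • q).1 = a • (x + p.1) + b • (y + q.1) := by
    simp only [Prod.fst_add, Prod.smul_fst]
    module
  have e2 : a • x + b • y + (a • p + b • q).2.1 - ξhat
      = a • (x + p.2.1 - ξhat) + b • (y + q.2.1 - ξhat) := by
    simp only [Prod.snd_add, Prod.smul_snd, Prod.fst_add, Prod.smul_fst]
    have : ξhat = a • ξhat + b • ξhat := by rw [← add_smul, hab, one_smul]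
    rw [show a • x + b • y + (a • p.2.1 + b • q.2.1) - ξhat
        = a • x + b • y + (a • p.2.1 + b • q.2.1) - (a • ξhat + b • ξhat) from by rw [← this]]
    module
  have hg1 : a * g (x + p.1) + b * g (y + q.1) ≤ g (a • (x + p.1) + b • (y + q.1)) := by
    have := hg_concave.2 (Set.mem_univ (x + p.1)) (Set.mem_univ (y + q.1)) ha hb hab
    simpa [smul_eq_mul] using this
  have hg2 : -g (a • x + b • y + (a • p + b • q).1)
      ≤ a * (-g (x + p.1)) + b * (-g (y + q.1)) := by
    rw [e1]; linarith
  have hNle : N (a • x + b • y + (a • p + b • q).2.1 - ξhat)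
      ≤ a * N (x + p.2.1 - ξhat) + b * N (y + q.2.1 - ξhat) := by
    rw [e2]
    calc N (a • (x + p.2.1 - ξhat) + b • (y + q.2.1 - ξhat))
        ≤ N (a • (x + p.2.1 - ξhat)) + N (b • (y + q.2.1 - ξhat)) := hN_add _ _
      _ = a * N (x + p.2.1 - ξhat) + b * N (y + q.2.1 - ξhat) := by
          rw [hN_smul, hN_smul, abs_of_nonneg ha, abs_of_nonneg hb]
  have hN0 : ∀ w, 0 ≤ N w := by
    intro w
    have h := hN_add w (-w)
    have h2 : N (-w) = N w := by simpa using hN_smul (-1) w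
    have h3 : N 0 = 0 := (hN_zero 0).mpr rfl
    rw [add_neg_cancel, h3, h2] at h
    linarith
  have hkey : a * (-g (x + p.1) + θ * N (x + p.2.1 - ξhat))
      + b * (-g (y + q.1) + θ * N (y + q.2.1 - ξhat)) < a * p.2.2 + b * q.2.2 := by
    rcases eq_or_lt_of_le ha with h0 | hapos
    · have hb1 : b = 1 := by linarith
      rw [← h0, hb1]; simpa using hqy
    · rcases eq_or_lt_of_le hb with h0 | hbpos
      · have ha1 : a = 1 := by linarith
        rw [← h0, ha1]; simpa using hpx
      · exact add_lt_add (mul_lt_mul_of_pos_left hpx hapos) (mul_lt_mul_of_pos_left hqy hbpos)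
  have hfinal : (a • p + b • q).2.2 = a * p.2.2 + b * q.2.2 := by
    simp [Prod.snd_add, Prod.smul_snd, smul_eq_mul]
  rw [hfinal]
  have hθN : θ * N (a • x + b • y + (a • p + b • q).2.1 - ξhat)
      ≤ a * (θ * N (x + p.2.1 - ξhat)) + b * (θ * N (y + q.2.1 - ξhat)) := by
    have := mul_le_mul_of_nonneg_left hNle hθ
    linarith [this]
  calc -g (a • x + b • y + (a • p + b • q).1)
        + θ * N (a • x + b • y + (a • p + b • q).2.1 - ξhat)
      ≤ a * (-g (x + p.1) + θ * N (x + p.2.1 - ξhat))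
        + b * (-g (y + q.1) + θ * N (y + q.2.1 - ξhat)) := by linarith
    _ < a * p.2.2 + b * q.2.2 := hkey


set_option maxHeartbeats 1000000 in
theorem strong_dir {d : ℕ} {g : (Fin d → ℝ) → ℝ} {Xi : Set (Fin d → ℝ)}
    {ξhat : Fin d → ℝ} {θ : ℝ} {N : (Fin d → ℝ) → ℝ} {dualN : (Fin d → ℝ) → ℝ}
    (hg_concave : ConcaveOn ℝ Set.univ g)
    (hXi_ne : Xi.Nonempty) (hXi_convex : Convex ℝ Xi) (hθ : 0 ≤ θ)
    (hN_add : ∀ x y, N (x + y) ≤ N x + N y)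
    (hN_smul : ∀ (c : ℝ) x, N (c • x) = |c| * N x)
    (hN_zero : ∀ x, N x = 0 ↔ x = 0)
    (hdual : ∀ s, dualN s = sSup {r : ℝ | ∃ v, N v ≤ 1 ∧ r = ∑ i, s i * v i}) :
    (⨅ (z : {z : Fin d → ℝ // dualN z ≤ θ}) (v : Fin d → ℝ),
          ((⨆ x : Fin d → ℝ, (((∑ i, (z.1 i - v i) * x i) + g x : ℝ) : EReal))
            + (⨆ ξ ∈ Xi, ((∑ i, v i * ξ i : ℝ) : EReal))
            - ((∑ i, z.1 i * ξhat i : ℝ) : EReal)))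
      ≤ ⨆ ξ ∈ Xi, ((g ξ - θ * N (ξ - ξhat) : ℝ) : EReal) := by
  obtain ⟨x0, hx0⟩ := hXi_ne
  set LHS := ⨆ ξ ∈ Xi, ((g ξ - θ * N (ξ - ξhat) : ℝ) : EReal) with hLHSdef
  by_cases hT : LHS = ⊤
  · rw [hT]; exact le_top
  have hgc : Continuous g := by
    have h1 : ContinuousOn g Set.univ :=
      ConcaveOn.continuousOn isOpen_univ hg_concave
    exact continuousOn_univ.mp h1
  have Ncont : Continuous N := N_cont hN_add hN_smul hN_zero
  have hBne : ((g x0 - θ * N (x0 - ξhat) : ℝ) : EReal) ≤ LHS :=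
    le_iSup₂ (f := fun ξ (_ : ξ ∈ Xi) => ((g ξ - θ * N (ξ - ξhat) : ℝ) : EReal)) x0 hx0
  have hBot : LHS ≠ ⊥ := fun h => by
    rw [h] at hBne; exact (EReal.coe_ne_bot _) (le_bot_iff.mp hBne)
  set s : ℝ := LHS.toReal with hs
  have hLHS : ((s : ℝ) : EReal) = LHS := EReal.coe_toReal hT hBot
  have hsle : ∀ ξ ∈ Xi, g ξ - θ * N (ξ - ξhat) ≤ s := by
    intro ξ hξ
    have h1 : ((g ξ - θ * N (ξ - ξhat) : ℝ) : EReal) ≤ LHS :=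
      le_iSup₂ (f := fun ξ (_ : ξ ∈ Xi) => ((g ξ - θ * N (ξ - ξhat) : ℝ) : EReal)) ξ hξ
    rw [← hLHS] at h1
    exact EReal.coe_le_coe_iff.mp h1
  -- separation setup
  set S : Set ((Fin d → ℝ) × (Fin d → ℝ) × ℝ) :=
    {p | ∃ x ∈ Xi, -g (x + p.1) + θ * N (x + p.2.1 - ξhat) < p.2.2} with hSdef
  have hScvx : Convex ℝ S := S_convex hg_concave hXi_convex hθ hN_add hN_smul hN_zero
  set tstar : ℝ := -g x0 + θ * N (x0 - ξhat) + 1 with htstar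
  set ystar : (Fin d → ℝ) × (Fin d → ℝ) × ℝ := (0, 0, tstar) with hystar
  set U : Set ((Fin d → ℝ) × (Fin d → ℝ) × ℝ) :=
    {p | -g (x0 + p.1) + θ * N (x0 + p.2.1 - ξhat) < p.2.2} with hUdef
  have hUopen : IsOpen U := by
    have hc1 : Continuous fun p : (Fin d → ℝ) × (Fin d → ℝ) × ℝ =>
        -g (x0 + p.1) + θ * N (x0 + p.2.1 - ξhat) := by
      apply Continuous.add
      · exact (hgc.comp (continuous_const.add continuous_fst)).neg
      · exact continuous_const.mul (Ncont.comp
          ((continuous_const.add (continuous_fst.comp continuous_snd)).sub continuous_const))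
    exact isOpen_lt hc1 (continuous_snd.comp continuous_snd)
  have hUS : U ⊆ S := fun p hp => ⟨x0, hx0, hp⟩
  have hUint : U ⊆ interior S := interior_maximal hUS hUopen
  have hystarU : ystar ∈ U := by
    simp only [hUdef, Set.mem_setOf_eq, hystar, add_zero, htstar]
    linarith
  set p0 : (Fin d → ℝ) × (Fin d → ℝ) × ℝ := (0, 0, -s) with hp0def
  have hp0 : p0 ∉ S := by
    rintro ⟨x, hx, hlt⟩
    simp only [hp0def, add_zero] at hlt
    have := hsle x hx
    linarith
  have hp0i : p0 ∉ interior S := fun h => hp0 (interior_subset h)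
  obtain ⟨f, hf⟩ := geometric_hahn_banach_open_point (hScvx.interior) isOpen_interior hp0i
  -- extend separation to all of S
  have hfS : ∀ p ∈ S, f p ≤ f p0 := by
    intro p hp
    have hy : ystar ∈ interior S := hUint hystarU
    have hseg : ∀ l : ℝ, l ∈ Set.Ioo (0:ℝ) 1 → (1 - l) * f p + l * f ystar < f p0 := by
      intro l hl
      have hmem : (1 - l) • p + l • ystar ∈ interior S :=
        hScvx.openSegment_self_interior_subset_interior hp hy
          ⟨1 - l, l, by linarith [hl.2], hl.1, by ring, rfl⟩
      have h1 := hf _ hmem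
      rwa [map_add, map_smul, map_smul, smul_eq_mul, smul_eq_mul] at h1
    have ht : Filter.Tendsto (fun l : ℝ => (1 - l) * f p + l * f ystar)
        (nhdsWithin 0 (Set.Ioi 0)) (nhds (f p)) := by
      have hcont : Continuous (fun l : ℝ => (1 - l) * f p + l * f ystar) :=
        ((continuous_const.sub continuous_id).mul continuous_const).add
          (continuous_id.mul continuous_const)
      have h2 := hcont.tendsto 0
      simp only [sub_zero, one_mul, zero_mul, add_zero] at h2
      exact h2.mono_left nhdsWithin_le_nhds
    refine le_of_tendsto ht ?_
    filter_upwards [Ioo_mem_nhdsGT_of_mem (by norm_num : (0:ℝ) ∈ Set.Ico (0:ℝ) 1)] with l hl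
    exact (hseg l hl).le
  -- decompose f
  set c : ℝ := f ((0 : Fin d → ℝ), (0 : Fin d → ℝ), (1 : ℝ)) with hcdef
  have hsplit : ∀ (u1 u2 : Fin d → ℝ) (t : ℝ),
      f (u1, u2, t) = f (u1, 0, 0) + f (0, u2, 0) + t * c := by
    intro u1 u2 t
    have he : (u1, u2, t) = ((u1, (0 : Fin d → ℝ), (0:ℝ)) : (Fin d → ℝ) × (Fin d → ℝ) × ℝ)
        + ((0 : Fin d → ℝ), u2, (0:ℝ)) + t • ((0 : Fin d → ℝ), (0 : Fin d → ℝ), (1:ℝ)) := by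
      simp [Prod.ext_iff]
    rw [he, map_add, map_add, map_smul, smul_eq_mul, hcdef]
  have hfp0 : f p0 = -s * c := by
    have he : p0 = (-s) • ((0 : Fin d → ℝ), (0 : Fin d → ℝ), (1:ℝ)) := by
      simp [hp0def, Prod.ext_iff]
    rw [he, map_smul, smul_eq_mul, hcdef]
  have hf000 : f ((0 : Fin d → ℝ), (0 : Fin d → ℝ), (0 : ℝ)) = 0 := by
    have : ((0 : Fin d → ℝ), (0 : Fin d → ℝ), (0 : ℝ))
        = (0 : (Fin d → ℝ) × (Fin d → ℝ) × ℝ) := by simp [Prod.ext_iff]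
    rw [this, map_zero]
  have hc : c ≤ 0 := by
    by_contra hcc
    push_neg at hcc
    set T : ℝ := max tstar ((-s * c + 1) / c) with hTdef
    have hTS : ((0 : Fin d → ℝ), (0 : Fin d → ℝ), T) ∈ S := by
      refine ⟨x0, hx0, ?_⟩
      simp only [add_zero]
      have : tstar ≤ T := le_max_left _ _
      rw [htstar] at this
      linarith
    have h1 := hfS _ hTS
    rw [hsplit, hfp0, hf000] at h1
    have h2 : (-s * c + 1) / c ≤ T := le_max_right _ _
    have h3 : (-s * c + 1) / c * c ≤ T * c := mul_le_mul_of_nonneg_right h2 hcc.le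
    rw [div_mul_cancel₀ _ hcc.ne'] at h3
    linarith
  have hcneg : c < 0 := by
    rcases lt_or_eq_of_le hc with h | h
    · exact h
    · exfalso
      have h1 := hf ystar (hUint hystarU)
      rw [hfp0, hystar, hsplit, hf000, h] at h1
      simp at h1
  -- the master inequality
  have key : ∀ x ∈ Xi, ∀ u1 u2 : Fin d → ℝ,
      f (u1, 0, 0) + f (0, u2, 0) + (-g (x + u1) + θ * N (x + u2 - ξhat)) * c ≤ -s * c := by
    intro x hx u1 u2
    refine le_of_forall_pos_le_add fun ε hε => ?_
    have hδ : 0 < ε / (-c) := div_pos hε (neg_pos.mpr hcneg)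
    have hmem : (u1, u2, (-g (x + u1) + θ * N (x + u2 - ξhat)) + ε / (-c)) ∈ S :=
      ⟨x, hx, by simp only [Set.mem_setOf_eq]; linarith⟩
    have h1 := hfS _ hmem
    rw [hsplit, hfp0] at h1
    have h2 : (ε / (-c)) * c = -ε := by
      rw [div_mul_eq_mul_div, div_eq_iff (neg_ne_zero.mpr hcneg.ne)]; ring
    nlinarith [h1, h2]
  -- linear functionals on coordinates
  set Lm1 : (Fin d → ℝ) →ₗ[ℝ] ℝ :=
    f.toLinearMap.comp (LinearMap.inl ℝ (Fin d → ℝ) ((Fin d → ℝ) × ℝ)) with hLm1def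
  set Lm2 : (Fin d → ℝ) →ₗ[ℝ] ℝ :=
    f.toLinearMap.comp ((LinearMap.inr ℝ (Fin d → ℝ) ((Fin d → ℝ) × ℝ)).comp
      (LinearMap.inl ℝ (Fin d → ℝ) ℝ)) with hLm2def
  have hLm1 : ∀ u : Fin d → ℝ, f (u, 0, 0) = Lm1 u := fun u => rfl
  have hLm2 : ∀ u : Fin d → ℝ, f (0, u, 0) = Lm2 u := fun u => rfl
  have hpi : ∀ (L : (Fin d → ℝ) →ₗ[ℝ] ℝ) (w : Fin d → ℝ),
      L w = ∑ i, w i * L (fun j => if i = j then 1 else 0) := by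
    intro L w
    rw [LinearMap.pi_apply_eq_sum_univ]
    exact Finset.sum_congr rfl fun i _ => by rw [smul_eq_mul]
  set δv : Fin d → (Fin d → ℝ) := fun i j => if i = j then 1 else 0 with hδvdef
  set z : Fin d → ℝ := fun i => Lm2 (δv i) / c with hzdef
  set v : Fin d → ℝ := fun i => (Lm1 (δv i) + Lm2 (δv i)) / c with hvdef
  have hsum1 : ∀ w : Fin d → ℝ, ∑ i, (z i - v i) * w i = -Lm1 w / c := by
    intro w
    calc ∑ i, (z i - v i) * w i = ∑ i, -(w i * Lm1 (δv i)) / c :=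
        Finset.sum_congr rfl fun i _ => by rw [hzdef, hvdef]; ring
      _ = -(∑ i, w i * Lm1 (δv i)) / c := by
          rw [← Finset.sum_div, ← Finset.sum_neg_distrib]
      _ = -Lm1 w / c := by rw [← hpi]
  have hsum2 : ∀ w : Fin d → ℝ, ∑ i, v i * w i = (Lm1 w + Lm2 w) / c := by
    intro w
    calc ∑ i, v i * w i = ∑ i, (w i * Lm1 (δv i) + w i * Lm2 (δv i)) / c :=
        Finset.sum_congr rfl fun i _ => by rw [hvdef]; ring
      _ = ((∑ i, w i * Lm1 (δv i)) + ∑ i, w i * Lm2 (δv i)) / c := by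
          rw [← Finset.sum_div, ← Finset.sum_add_distrib]
      _ = (Lm1 w + Lm2 w) / c := by rw [← hpi, ← hpi]
  have hsum3 : ∀ w : Fin d → ℝ, ∑ i, z i * w i = Lm2 w / c := by
    intro w
    calc ∑ i, z i * w i = ∑ i, (w i * Lm2 (δv i)) / c :=
        Finset.sum_congr rfl fun i _ => by rw [hzdef]; ring
      _ = (∑ i, w i * Lm2 (δv i)) / c := by rw [← Finset.sum_div]
      _ = Lm2 w / c := by rw [← hpi]
  -- dual norm bound
  have hzw : ∀ w : Fin d → ℝ, θ * N w * c ≤ Lm2 w := by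
    intro w
    have hrle : ∀ r : ℝ, 0 < r → r * (θ * N w * c - Lm2 w)
        ≤ -s * c - Lm2 ξhat + Lm2 x0 + g x0 * c := by
      intro r hr
      have hk := key x0 hx0 0 (ξhat - r • w - x0)
      have e1 : x0 + (0 : Fin d → ℝ) = x0 := add_zero x0
      have e2 : x0 + (ξhat - r • w - x0) - ξhat = -(r • w) := by module
      have e3 : N (-(r • w)) = r * N w := by
        rw [N_neg hN_smul, hN_smul, abs_of_pos hr]
      rw [e1, e2, e3, hf000, hLm2] at hk
      have e4 : Lm2 (ξhat - r • w - x0) = Lm2 ξhat - r * Lm2 w - Lm2 x0 := by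
        rw [map_sub, map_sub, map_smul, smul_eq_mul]
      rw [e4] at hk
      nlinarith [hk]
    have := aux_r_le hrle
    linarith
  have hz : dualN z ≤ θ := by
    rw [hdual]
    refine csSup_le ⟨0, 0, by simp [(hN_zero 0).mpr rfl], by simp⟩ ?_
    rintro r ⟨w, hw, rfl⟩
    have h1 : ∑ i, z i * w i ≤ θ * N w := by
      rw [hsum3, div_le_iff_of_neg hcneg]
      exact hzw w
    calc ∑ i, z i * w i ≤ θ * N w := h1
      _ ≤ θ * 1 := mul_le_mul_of_nonneg_left hw hθ
      _ = θ := mul_one θ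
  -- the key real inequality for the dual objective
  have hstar : ∀ p : Fin d → ℝ, ∀ x ∈ Xi,
      (∑ i, (z i - v i) * p i) + g p + (∑ i, v i * x i) ≤ s + ∑ i, z i * ξhat i := by
    intro p x hx
    have hk := key x hx (p - x) (ξhat - x)
    have e1 : x + (p - x) = p := by module
    have e2 : x + (ξhat - x) - ξhat = 0 := by module
    rw [e1, e2, (hN_zero 0).mpr rfl, hLm1, hLm2] at hk
    have e3 : Lm1 (p - x) = Lm1 p - Lm1 x := map_sub _ _ _
    have e4 : Lm2 (ξhat - x) = Lm2 ξhat - Lm2 x := map_sub _ _ _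
    rw [e3, e4] at hk
    rw [hsum1, hsum2, hsum3]
    have h2 : (-Lm1 p + (Lm1 x + Lm2 x) - Lm2 ξhat) / c ≤ s - g p := by
      rw [div_le_iff_of_neg hcneg]
      nlinarith [hk]
    have h3 : (-Lm1 p + (Lm1 x + Lm2 x) - Lm2 ξhat) / c
        = -Lm1 p / c + (Lm1 x + Lm2 x) / c - Lm2 ξhat / c := by ring
    linarith
  -- conclude
  refine iInf_le_of_le ⟨z, hz⟩ (iInf_le_of_le v ?_)
  show (⨆ x : Fin d → ℝ, (((∑ i, (z i - v i) * x i) + g x : ℝ) : EReal))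
      + (⨆ ξ ∈ Xi, ((∑ i, v i * ξ i : ℝ) : EReal))
      - ((∑ i, z i * ξhat i : ℝ) : EReal) ≤ LHS
  set K : ℝ := s + ∑ i, z i * ξhat i with hKdef
  set A : EReal := ⨆ x : Fin d → ℝ, (((∑ i, (z i - v i) * x i) + g x : ℝ) : EReal) with hAdef
  set B : EReal := ⨆ ξ ∈ Xi, ((∑ i, v i * ξ i : ℝ) : EReal) with hBdef
  have hAub : A ≤ ((K - ∑ i, v i * x0 i : ℝ) : EReal) :=
    iSup_le fun p => EReal.coe_le_coe_iff.mpr (by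
      have := hstar p x0 hx0; rw [hKdef]; linarith)
  have hAlb : (((∑ i, (z i - v i) * (0 : Fin d → ℝ) i) + g 0 : ℝ) : EReal) ≤ A :=
    le_iSup (fun x : Fin d → ℝ => (((∑ i, (z i - v i) * x i) + g x : ℝ) : EReal)) 0
  have hAtop : A ≠ ⊤ := ne_top_of_le_ne_top (EReal.coe_ne_top _) hAub
  have hAbot : A ≠ ⊥ := fun h => (EReal.coe_ne_bot _) (le_bot_iff.mp (h ▸ hAlb))
  have hBub : B ≤ ((K - ((∑ i, (z i - v i) * (0 : Fin d → ℝ) i) + g 0) : ℝ) : EReal) := by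
    refine iSup₂_le fun ξ hξ => EReal.coe_le_coe_iff.mpr ?_
    have := hstar 0 ξ hξ; rw [hKdef]; linarith
  have hBlb : ((∑ i, v i * x0 i : ℝ) : EReal) ≤ B :=
    le_iSup₂ (f := fun ξ (_ : ξ ∈ Xi) => ((∑ i, v i * ξ i : ℝ) : EReal)) x0 hx0
  have hBtop : B ≠ ⊤ := ne_top_of_le_ne_top (EReal.coe_ne_top _) hBub
  have hBbot : B ≠ ⊥ := fun h => (EReal.coe_ne_bot _) (le_bot_iff.mp (h ▸ hBlb))
  set a : ℝ := A.toReal with hadef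
  set b : ℝ := B.toReal with hbdef
  have hA : ((a : ℝ) : EReal) = A := EReal.coe_toReal hAtop hAbot
  have hB : ((b : ℝ) : EReal) = B := EReal.coe_toReal hBtop hBbot
  have ha_ub : ∀ p : Fin d → ℝ, (∑ i, (z i - v i) * p i) + g p ≤ a := fun p =>
    EReal.coe_le_coe_iff.mp (hA ▸ le_iSup
      (fun x : Fin d → ℝ => (((∑ i, (z i - v i) * x i) + g x : ℝ) : EReal)) p)
  have ha_least : ∀ m : ℝ, (∀ p : Fin d → ℝ, (∑ i, (z i - v i) * p i) + g p ≤ m) → a ≤ m := by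
    intro m hm
    refine EReal.coe_le_coe_iff.mp ?_
    rw [hA]
    exact iSup_le fun p => EReal.coe_le_coe_iff.mpr (hm p)
  have hb_least : ∀ m : ℝ, (∀ ξ ∈ Xi, (∑ i, v i * ξ i) ≤ m) → b ≤ m := by
    intro m hm
    refine EReal.coe_le_coe_iff.mp ?_
    rw [hB]
    exact iSup₂_le fun ξ hξ => EReal.coe_le_coe_iff.mpr (hm ξ hξ)
  have hb1 : ∀ p : Fin d → ℝ, b ≤ K - ((∑ i, (z i - v i) * p i) + g p) := by
    intro p
    refine hb_least _ fun ξ hξ => ?_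
    have := hstar p ξ hξ; rw [hKdef]; linarith
  have hab : a + b ≤ K := by
    have h1 : a ≤ K - b := ha_least _ fun p => by linarith [hb1 p]
    linarith
  calc A + B - ((∑ i, z i * ξhat i : ℝ) : EReal)
      = ((a : ℝ) : EReal) + ((b : ℝ) : EReal) - ((∑ i, z i * ξhat i : ℝ) : EReal) := by
        rw [hA, hB]
    _ = ((a + b - ∑ i, z i * ξhat i : ℝ) : EReal) := by
        rw [← EReal.coe_add, ← EReal.coe_sub]
    _ ≤ ((s : ℝ) : EReal) := EReal.coe_le_coe_iff.mpr (by rw [hKdef] at hab; linarith)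
    _ = LHS := hLHS



end Strong

/-- Fenchel-duality reformulation of the inner maximization
`sup_{ξ ∈ Ξ} [g(ξ) - θ ‖ξ - ξ̂‖]` in terms of the conjugate of `-g`, the support
function of `Ξ`, and the dual-norm constraint `‖z‖_* ≤ θ`. -/
theorem robust_counterpart_fenchel_duality
    (d : ℕ) (g : (Fin d → ℝ) → ℝ)
    (hg_concave : ConcaveOn ℝ Set.univ g)
    (hg_usc : UpperSemicontinuous g)
    (Xi : Set (Fin d → ℝ)) (hXi_ne : Xi.Nonempty)
    (hXi_closed : IsClosed Xi) (hXi_convex : Convex ℝ Xi)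
    (ξhat : Fin d → ℝ) (θ : ℝ) (hθ : 0 ≤ θ)
    (N : (Fin d → ℝ) → ℝ)
    (hN_add : ∀ x y, N (x + y) ≤ N x + N y)
    (hN_smul : ∀ (c : ℝ) x, N (c • x) = |c| * N x)
    (hN_zero : ∀ x, N x = 0 ↔ x = 0)
    (dualN : (Fin d → ℝ) → ℝ)
    (hdual : ∀ s, dualN s = sSup {r : ℝ | ∃ v, N v ≤ 1 ∧ r = ∑ i, s i * v i}) :
    (⨆ ξ ∈ Xi, ((g ξ - θ * N (ξ - ξhat) : ℝ) : EReal))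
      = ⨅ (z : {z : Fin d → ℝ // dualN z ≤ θ}) (v : Fin d → ℝ),
          ((⨆ x : Fin d → ℝ, (((∑ i, (z.1 i - v i) * x i) + g x : ℝ) : EReal))
            + (⨆ ξ ∈ Xi, ((∑ i, v i * ξ i : ℝ) : EReal))
            - ((∑ i, z.1 i * ξhat i : ℝ) : EReal)) := by
  refine le_antisymm ?_ ?_
  · -- weak duality
    refine le_iInf fun z => le_iInf fun v => ?_
    refine iSup_le fun ξ => iSup_le fun hξ => ?_
    have hzw := dual_pair hN_add hN_smul hN_zero hdual z.2
    set C : ℝ := ∑ i, z.1 i * ξhat i with hC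
    set a' : ℝ := (∑ i, (z.1 i - v i) * ξ i) + g ξ with ha'
    set b' : ℝ := ∑ i, v i * ξ i with hb'
    have hreal : g ξ - θ * N (ξ - ξhat) + C ≤ a' + b' := by
      have h1 := hzw (ξhat - ξ)
      have h2 : N (ξhat - ξ) = N (ξ - ξhat) := by
        rw [← N_neg hN_smul (ξ - ξhat), neg_sub]
      rw [h2] at h1
      have e1 : ∑ i, z.1 i * (ξhat - ξ) i = C - ∑ i, z.1 i * ξ i := by
        rw [hC, ← Finset.sum_sub_distrib]
        exact Finset.sum_congr rfl fun i _ => by simp [Pi.sub_apply]; ring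
      have e2 : ∑ i, (z.1 i - v i) * ξ i = (∑ i, z.1 i * ξ i) - ∑ i, v i * ξ i := by
        rw [← Finset.sum_sub_distrib]
        exact Finset.sum_congr rfl fun i _ => by ring
      rw [e1] at h1
      rw [ha', hb', e2]
      linarith
    have hA : ((a' : ℝ) : EReal) ≤ ⨆ x : Fin d → ℝ, (((∑ i, (z.1 i - v i) * x i) + g x : ℝ) : EReal) :=
      le_iSup (fun x => (((∑ i, (z.1 i - v i) * x i) + g x : ℝ) : EReal)) ξ
    have hB : ((b' : ℝ) : EReal) ≤ ⨆ ξ ∈ Xi, ((∑ i, v i * ξ i : ℝ) : EReal) :=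
      le_iSup₂ (f := fun ξ (_ : ξ ∈ Xi) => ((∑ i, v i * ξ i : ℝ) : EReal)) ξ hξ
    calc ((g ξ - θ * N (ξ - ξhat) : ℝ) : EReal)
        = ((g ξ - θ * N (ξ - ξhat) + C : ℝ) : EReal) - ((C : ℝ) : EReal) := by
          rw [← EReal.coe_sub]; norm_cast; ring
      _ ≤ ((a' + b' : ℝ) : EReal) - ((C : ℝ) : EReal) :=
          EReal.sub_le_sub (EReal.coe_le_coe_iff.mpr hreal) le_rfl
      _ = (((a' : ℝ) : EReal) + ((b' : ℝ) : EReal)) - ((C : ℝ) : EReal) := by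
          rw [EReal.coe_add]
      _ ≤ _ := EReal.sub_le_sub (add_le_add hA hB) le_rfl
  · exact strong_dir hg_concave hXi_ne hXi_convex hθ hN_add hN_smul hN_zero hdual
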